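/- Let Î be a finite set of intervals and let I* be the earliest-finish greedy optimal solution of Î. Then for every interval i ∈ Î there exists an interval r ∈ I* such that r overlaps i and the right endpoint of r is at most the right endpoint of i. (In particular, this holds for every interval of Î belonging to an optimal solution of the input, as used in the analysis of TrustGreedy.) -/

import Mathlib

open scoped Classical

/-- An interval is a pair `(a, b)` of integers; it is *valid* when `a < b`. -/
abbrev Iv := ℤ × ℤ

/-- Two intervals `(a,b)` and `(c,d)` overlap if `max a c < min b d`. -/
def Overlap (i j : Iv) : Prop := max i.1 j.1 < min i.2 j.2

instance : ∀ i j : Iv, Decidable (Overlap i j) := fun _ _ => by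
  unfold Overlap; infer_instance

/-- A finite set of intervals is pairwise non-overlapping. -/
def NonOverlapping (T : Finset Iv) : Prop :=
  ∀ i ∈ T, ∀ j ∈ T, i ≠ j → ¬ Overlap i j

instance : DecidablePred NonOverlapping := fun _ => by
  unfold NonOverlapping; infer_instance

/-- `Opt S` is the maximum cardinality of a pairwise non-overlapping subset of `S`. -/
def Opt (S : Finset Iv) : ℕ :=
  (S.powerset.filter fun T => NonOverlapping T).sup Finset.card

/-- The interval of `S` with minimum right endpoint, ties broken by the fixed rule of
taking the minimum left endpoint (obtained as the lexicographic minimum of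
`(right endpoint, left endpoint)`). -/
def efPick (S : Finset Iv) (h : S.Nonempty) : Iv :=
  let m := (S.image fun i => toLex (i.2, i.1)).min' (h.image _)
  ((ofLex m).2, (ofLex m).1)

/-- Fuelled version of the earliest-finish greedy construction: repeatedly add an
interval with minimum right endpoint among the intervals overlapping no
already-selected interval. -/
def efGreedyAux : ℕ → Finset Iv → Finset Iv
  | 0, _ => ∅
  | fuel + 1, S =>
    if h : S.Nonempty then
      let r := efPick S h
      insert r (efGreedyAux fuel (S.filter fun i => i ≠ r ∧ ¬ Overlap i r))
    else ∅

/-- The earliest-finish greedy optimal solution `I*` of a prediction set. -/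
def efGreedy (S : Finset Iv) : Finset Iv := efGreedyAux S.card S

/-- every interval `i` of the prediction set `Ihat` overlaps some
interval `r` of the earliest-finish greedy optimal solution `I* = efGreedy Ihat`
whose right endpoint is at most the right endpoint of `i`. -/

lemma efPick_mem (S : Finset Iv) (h : S.Nonempty) : efPick S h ∈ S := by
  unfold efPick
  have hm := Finset.min'_mem (S.image fun i => toLex (i.2, i.1)) (h.image _)
  simp only [Finset.mem_image] at hm
  obtain ⟨i, hi, hmi⟩ := hm
  simpa [← hmi] using hi

lemma efPick_snd_le (S : Finset Iv) (h : S.Nonempty) :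
    ∀ j ∈ S, (efPick S h).2 ≤ j.2 := by
  intro j hj
  have hle := Finset.min'_le (S.image fun i => toLex (i.2, i.1))
    (toLex (j.2, j.1)) (Finset.mem_image_of_mem _ hj)
  unfold efPick
  rcases Prod.Lex.le_iff.1 hle with h1 | ⟨h1, _⟩
  · exact le_of_lt h1
  · exact le_of_eq h1

lemma efGreedyAux_spec : ∀ (fuel : ℕ) (S : Finset Iv), S.card ≤ fuel →
    (∀ i ∈ S, i.1 < i.2) →
    ∀ i ∈ S, ∃ r ∈ efGreedyAux fuel S, Overlap r i ∧ r.2 ≤ i.2 := by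
  intro fuel
  induction fuel with
  | zero =>
    intro S hcard _ i hi
    rw [Nat.le_zero, Finset.card_eq_zero] at hcard
    simp [hcard] at hi
  | succ n ih =>
    intro S hcard hval i hi
    have hS : S.Nonempty := ⟨i, hi⟩
    set r := efPick S hS with hr
    have hrS : r ∈ S := efPick_mem S hS
    have hr2 : r.2 ≤ i.2 := efPick_snd_le S hS i hi
    rw [efGreedyAux, dif_pos hS]
    by_cases hov : Overlap r i
    · exact ⟨r, Finset.mem_insert_self _ _, hov, hr2⟩
    · have hne : i ≠ r := by
        rintro rfl
        exact hov (by simpa [Overlap] using hval _ hi)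
      have hov' : ¬ Overlap i r := by
        simpa [Overlap, max_comm i.1 r.1, min_comm i.2 r.2] using hov
      set T := S.filter fun j => j ≠ r ∧ ¬ Overlap j r with hT
      have hiT : i ∈ T := Finset.mem_filter.2 ⟨hi, hne, hov'⟩
      have hTcard : T.card ≤ n := by
        have hss : T ⊂ S := by
          refine Finset.ssubset_iff_of_subset (Finset.filter_subset _ _) |>.2 ⟨r, hrS, ?_⟩
          simp [hT]
        have := Finset.card_lt_card hss
        omega
      obtain ⟨r', hr'mem, hr'ov, hr'le⟩ := ih T hTcard
        (fun j hj => hval j (Finset.mem_filter.1 hj).1) i hiT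
      exact ⟨r', Finset.mem_insert_of_mem hr'mem, hr'ov, hr'le⟩

theorem efGreedy_overlaps_with_earlier_right_endpoint
    (Ihat : Finset Iv) (hIhat : ∀ i ∈ Ihat, i.1 < i.2) :
    ∀ i ∈ Ihat, ∃ r ∈ efGreedy Ihat, Overlap r i ∧ r.2 ≤ i.2 := by
  exact fun i hi => efGreedyAux_spec Ihat.card Ihat le_rfl hIhat i hi
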